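/- arXiv:1604.00130 — 12 statements merged into one kernel-verified Lean document; each statement's English description precedes it below -/
import Mathlib

section
/- Let X be a G-space and f : X → X be continuous. If f is strongly G-mixing, then f is totally G-transitive, i.e. f^m is G-transitive for every m ≥ 1. -/
open Pointwise

/-- `f` is `G`-transitive: for every pair of nonempty open sets `U, V ⊆ X` there are
`g ∈ G` and `k ≥ 1` with `g • f^[k] '' U ∩ V ≠ ∅`. -/
def GTransitive {G X : Type*} [Group G] [MulAction G X] [TopologicalSpace X]
    (f : X → X) : Prop :=
  ∀ U V : Set X, IsOpen U → IsOpen V → U.Nonempty → V.Nonempty →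
    ∃ (g : G) (k : ℕ), 1 ≤ k ∧ (g • (f^[k] '' U) ∩ V).Nonempty

/-- `f` is strongly `G`-mixing: for every pair of nonempty open sets `U, V` there is
`N ∈ ℕ` such that for all `n ≥ N` there is `g ∈ G` with `g • f^[n] '' U ∩ V ≠ ∅`. -/
def StronglyGMixing {G X : Type*} [Group G] [MulAction G X] [TopologicalSpace X]
    (f : X → X) : Prop :=
  ∀ U V : Set X, IsOpen U → IsOpen V → U.Nonempty → V.Nonempty →
    ∃ N : ℕ, ∀ n ≥ N, ∃ g : G, (g • (f^[n] '' U) ∩ V).Nonempty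

/-- Let `X` be a `G`-space and `f : X → X` be continuous. If `f` is strongly `G`-mixing,
then `f` is totally `G`-transitive, i.e. `f^[m]` is `G`-transitive for every `m ≥ 1`. -/
theorem stronglyGMixing_totallyGTransitive {G X : Type*} [Group G] [TopologicalSpace G]
    [IsTopologicalGroup G] [TopologicalSpace X] [MulAction G X] [ContinuousSMul G X]
    (f : X → X) (hf : Continuous f) (hmix : StronglyGMixing (G := G) f) :
    ∀ m : ℕ, 1 ≤ m → GTransitive (G := G) (f^[m]) := by
  intro m hm U V hU hV hUne hVne
  obtain ⟨N, hN⟩ := hmix U V hU hV hUne hVne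
  obtain ⟨g, hg⟩ := hN (m * (N + 1)) (by nlinarith)
  exact ⟨g, N + 1, Nat.succ_le_succ (Nat.zero_le _), by
    rwa [← Function.iterate_mul]⟩
end

section
/- Let X be a G-space and f : X → X be pseudoequivariant. If f is weakly G-mixing, then for every n ∈ ℕ and every collection of nonempty open sets U_1, …, U_n, V_1, …, V_n ⊆ X there exist g_1, …, g_n ∈ G and k ≥ 1 such that g_i • f^k(U_i) ∩ V_i ≠ ∅ for every i = 1, …, n (i.e. the n-fold product f × ⋯ × f is (G × ⋯ × G)-transitive). -/
open Pointwise

/-- `f` is pseudoequivariant: `f(G • x) = G • f(x)` for every `x ∈ X`. -/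
def Pseudoequivariant {G X : Type*} [Group G] [MulAction G X] (f : X → X) : Prop :=
  ∀ x : X, f '' (MulAction.orbit G x) = MulAction.orbit G (f x)

/-- `f` is weakly `G`-mixing: `f × f` is `(G × G)`-transitive, i.e. for all nonempty open
`U, V, E, F ⊆ X` there are `g, h ∈ G` and `k ≥ 1` with `g • f^[k] '' U ∩ E ≠ ∅` and
`h • f^[k] '' V ∩ F ≠ ∅`. -/
def WeaklyGMixing {G X : Type*} [Group G] [MulAction G X] [TopologicalSpace X]
    (f : X → X) : Prop :=
  ∀ U V E F : Set X, IsOpen U → IsOpen V → IsOpen E → IsOpen F →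
    U.Nonempty → V.Nonempty → E.Nonempty → F.Nonempty →
    ∃ (g h : G) (k : ℕ), 1 ≤ k ∧
      (g • (f^[k] '' U) ∩ E).Nonempty ∧ (h • (f^[k] '' V) ∩ F).Nonempty

lemma pe_iterate_smul {G X : Type*} [Group G] [MulAction G X] {f : X → X}
    (hpe : Pseudoequivariant (G := G) f) (j : ℕ) (g : G) (x : X) :
    ∃ a : G, f^[j] (g • x) = a • f^[j] x := by
  induction j with
  | zero => exact ⟨g, rfl⟩
  | succ j ih =>
    obtain ⟨a, ha⟩ := ih
    have h1 : f (a • f^[j] x) ∈ MulAction.orbit G (f (f^[j] x)) := by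
      rw [← hpe (f^[j] x)]
      exact ⟨a • f^[j] x, MulAction.mem_orbit _ a, rfl⟩
    obtain ⟨b, hb⟩ := MulAction.mem_orbit_iff.mp h1
    exact ⟨b, by rw [Function.iterate_succ_apply', ha, Function.iterate_succ_apply', ← hb]⟩

lemma aux_nat {G X : Type*} [Group G] [TopologicalSpace G]
    [IsTopologicalGroup G] [TopologicalSpace X] [MulAction G X] [ContinuousSMul G X]
    (f : X → X) (hf : Continuous f) (hpe : Pseudoequivariant (G := G) f)
    (hwm : WeaklyGMixing (G := G) f) :
    ∀ (n : ℕ) (U V : ℕ → Set X),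
      (∀ i, IsOpen (U i)) → (∀ i, IsOpen (V i)) →
      (∀ i, (U i).Nonempty) → (∀ i, (V i).Nonempty) →
      ∃ (g : ℕ → G) (k : ℕ), 1 ≤ k ∧
        ∀ i ≤ n, (g i • (f^[k] '' U i) ∩ V i).Nonempty := by
  intro n
  induction n with
  | zero =>
    intro U V hUo hVo hUne hVne
    obtain ⟨g, h, k, hk, hg, -⟩ := hwm (U 0) (U 0) (V 0) (V 0) (hUo 0) (hUo 0) (hVo 0)
      (hVo 0) (hUne 0) (hUne 0) (hVne 0) (hVne 0)
    exact ⟨fun _ => g, k, hk, fun i hi => by rw [Nat.le_zero.mp hi]; exact hg⟩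
  | succ n ih =>
    intro U V hUo hVo hUne hVne
    obtain ⟨g₀, h₀, k, hk, hgU, hhV⟩ := hwm (U n) (V n) (U (n+1)) (V (n+1)) (hUo n)
      (hVo n) (hUo (n+1)) (hVo (n+1)) (hUne n) (hVne n) (hUne (n+1)) (hVne (n+1))
    set U' : ℕ → Set X := fun i =>
      if i = n then U n ∩ f^[k] ⁻¹' (g₀⁻¹ • U (n+1)) else U i with hU'
    set V' : ℕ → Set X := fun i =>
      if i = n then V n ∩ f^[k] ⁻¹' (h₀⁻¹ • V (n+1)) else V i with hV'
    have hU'n : U' n = U n ∩ f^[k] ⁻¹' (g₀⁻¹ • U (n+1)) := by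
      rw [hU']; simp
    have hV'n : V' n = V n ∩ f^[k] ⁻¹' (h₀⁻¹ • V (n+1)) := by
      rw [hV']; simp
    have hU'sub : ∀ i, U' i ⊆ U i := by
      intro i; rw [hU']; dsimp only; split
      · rename_i h; subst h; exact Set.inter_subset_left
      · exact subset_rfl
    have hV'sub : ∀ i, V' i ⊆ V i := by
      intro i; rw [hV']; dsimp only; split
      · rename_i h; subst h; exact Set.inter_subset_left
      · exact subset_rfl
    have hU'o : ∀ i, IsOpen (U' i) := by
      intro i; rw [hU']; dsimp only; split
      · exact (hUo n).inter (((hUo (n+1)).smul g₀⁻¹).preimage (hf.iterate k))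
      · exact hUo i
    have hV'o : ∀ i, IsOpen (V' i) := by
      intro i; rw [hV']; dsimp only; split
      · exact (hVo n).inter (((hVo (n+1)).smul h₀⁻¹).preimage (hf.iterate k))
      · exact hVo i
    have hU'ne : ∀ i, (U' i).Nonempty := by
      intro i; rw [hU']; dsimp only; split
      · obtain ⟨y, hy1, hy2⟩ := hgU
        obtain ⟨z, ⟨u, hu, rfl⟩, rfl⟩ := hy1
        exact ⟨u, hu, Set.mem_inv_smul_set_iff.mpr hy2⟩
      · exact hUne i
    have hV'ne : ∀ i, (V' i).Nonempty := by
      intro i; rw [hV']; dsimp only; split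
      · obtain ⟨y, hy1, hy2⟩ := hhV
        obtain ⟨z, ⟨u, hu, rfl⟩, rfl⟩ := hy1
        exact ⟨u, hu, Set.mem_inv_smul_set_iff.mpr hy2⟩
      · exact hVne i
    obtain ⟨g, m, hm, hgm⟩ := ih U' V' hU'o hV'o hU'ne hV'ne
    obtain ⟨w, hw1, hw2⟩ := hgm n le_rfl
    obtain ⟨p, ⟨x, hx, rfl⟩, rfl⟩ := hw1
    have hxU' : x ∈ U n ∩ f^[k] ⁻¹' (g₀⁻¹ • U (n+1)) := hU'n ▸ hx
    have hwV' : g n • f^[m] x ∈ V n ∩ f^[k] ⁻¹' (h₀⁻¹ • V (n+1)) := hV'n ▸ hw2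
    obtain ⟨a, ha⟩ := pe_iterate_smul hpe k (g n) (f^[m] x)
    obtain ⟨b, hb⟩ := pe_iterate_smul hpe m g₀ (f^[k] x)
    have hcomm : f^[k] (f^[m] x) = f^[m] (f^[k] x) := by
      rw [← Function.iterate_add_apply, ← Function.iterate_add_apply, Nat.add_comm]
    have hyU : g₀ • f^[k] x ∈ U (n+1) := Set.mem_inv_smul_set_iff.mp hxU'.2
    have hzV : h₀ • f^[k] (g n • f^[m] x) ∈ V (n+1) :=
      Set.mem_inv_smul_set_iff.mp hwV'.2
    set gN : G := h₀ * a * b⁻¹ with hgN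
    have hfin : gN • f^[m] (g₀ • f^[k] x) ∈ V (n+1) := by
      rw [hb, ← hcomm, hgN]
      rw [ha] at hzV
      simpa [mul_smul] using hzV
    refine ⟨Function.update g (n+1) gN, m, hm, fun i hi => ?_⟩
    rcases Nat.lt_or_ge i (n+1) with hlt | hge
    · have hne : i ≠ n + 1 := Nat.ne_of_lt hlt
      rw [Function.update_of_ne hne]
      obtain ⟨q, hq1, hq2⟩ := hgm i (Nat.lt_succ_iff.mp hlt)
      exact ⟨q, Set.smul_set_mono (Set.image_mono (hU'sub i)) hq1, hV'sub i hq2⟩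
    · have hie : i = n + 1 := Nat.le_antisymm hi hge
      subst hie
      rw [Function.update_self]
      exact ⟨gN • f^[m] (g₀ • f^[k] x),
        Set.smul_mem_smul_set ⟨g₀ • f^[k] x, hyU, rfl⟩, hfin⟩

/-- Let `X` be a `G`-space and `f : X → X` be pseudoequivariant. If `f` is weakly
`G`-mixing, then for every `n` and all nonempty open sets `U 1, …, U n, V 1, …, V n`
there are `g 1, …, g n ∈ G` and `k ≥ 1` with `g i • f^[k] '' (U i) ∩ V i ≠ ∅` for all
`i`, i.e. the `n`-fold product `f × ⋯ × f` is `(G × ⋯ × G)`-transitive. -/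
theorem weaklyGMixing_nfold_transitive {G X : Type*} [Group G] [TopologicalSpace G]
    [IsTopologicalGroup G] [TopologicalSpace X] [MulAction G X] [ContinuousSMul G X]
    (f : X → X) (hf : Continuous f) (hpe : Pseudoequivariant (G := G) f)
    (hwm : WeaklyGMixing (G := G) f) :
    ∀ (n : ℕ) (U V : Fin n → Set X),
      (∀ i, IsOpen (U i)) → (∀ i, IsOpen (V i)) →
      (∀ i, (U i).Nonempty) → (∀ i, (V i).Nonempty) →
      ∃ (g : Fin n → G) (k : ℕ), 1 ≤ k ∧
        ∀ i, (g i • (f^[k] '' U i) ∩ V i).Nonempty := by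
  intro n U V hUo hVo hUne hVne
  rcases n with _ | m
  · exact ⟨fun i => i.elim0, 1, le_refl 1, fun i => i.elim0⟩
  · set U' : ℕ → Set X := fun i => if h : i < m + 1 then U ⟨i, h⟩ else U 0 with hU'
    set V' : ℕ → Set X := fun i => if h : i < m + 1 then V ⟨i, h⟩ else V 0 with hV'
    have hU'o : ∀ i, IsOpen (U' i) := by
      intro i; rw [hU']; dsimp only; split <;> apply hUo
    have hV'o : ∀ i, IsOpen (V' i) := by
      intro i; rw [hV']; dsimp only; split <;> apply hVo
    have hU'ne : ∀ i, (U' i).Nonempty := by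
      intro i; rw [hU']; dsimp only; split <;> apply hUne
    have hV'ne : ∀ i, (V' i).Nonempty := by
      intro i; rw [hV']; dsimp only; split <;> apply hVne
    obtain ⟨g, k, hk, hg⟩ := aux_nat f hf hpe hwm m U' V' hU'o hV'o hU'ne hV'ne
    refine ⟨fun i => g i.val, k, hk, fun i => ?_⟩
    have h1 := hg i.val (Nat.lt_succ_iff.mp i.isLt)
    have h2 : U' i.val = U i := by rw [hU']; simp [i.isLt]
    have h3 : V' i.val = V i := by rw [hV']; simp [i.isLt]
    rw [h2, h3] at h1
    exact h1
end

section
/- Let X be a G-space and f : X → X be pseudoequivariant. If f is weakly G-mixing, then f is totally G-transitive, i.e. f^m is G-transitive for every m ≥ 1. -/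
open Pointwise

section AuxLemmas

set_option linter.unusedSectionVars false

variable {G X : Type*} [Group G] [TopologicalSpace G]
    [IsTopologicalGroup G] [TopologicalSpace X] [MulAction G X] [ContinuousSMul G X]

/-- Pseudoequivariance for iterates, in pointwise form. -/
lemma pe_iter_aux (f : X → X) (hpe : Pseudoequivariant (G := G) f) :
    ∀ (n : ℕ) (g : G) (x : X), ∃ g' : G, f^[n] (g • x) = g' • f^[n] x := by
  intro n
  induction n with
  | zero => intro g x; exact ⟨g, rfl⟩
  | succ n ih =>
    intro g x
    have h1 : f (g • x) ∈ MulAction.orbit G (f x) := by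
      rw [← hpe x]; exact ⟨g • x, MulAction.mem_orbit x g, rfl⟩
    obtain ⟨h, hh⟩ := h1
    obtain ⟨g', hg'⟩ := ih h (f x)
    refine ⟨g', ?_⟩
    rw [Function.iterate_succ_apply, Function.iterate_succ_apply, ← hh]
    exact hg'

/-- Weak `G`-mixing implies `G`-transitivity. -/
lemma gtrans_of_wm_aux (f : X → X) (hwm : WeaklyGMixing (G := G) f) :
    GTransitive (G := G) f := by
  intro U V hU hV hUne hVne
  obtain ⟨g, h, k, hk, h1, _⟩ := hwm U U V V hU hU hV hV hUne hUne hVne hVne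
  exact ⟨g, k, hk, h1⟩

/-- Some group translate of a nonempty open set has nonempty `f`-preimage. -/
lemma preimage_nonempty_aux (f : X → X) (hwm : WeaklyGMixing (G := G) f)
    (W : Set X) (hW : IsOpen W) (hWne : W.Nonempty) :
    ∃ g : G, (f ⁻¹' (g • W)).Nonempty := by
  obtain ⟨g, k, hk, x, hx1, hx2⟩ := gtrans_of_wm_aux f hwm W W hW hW hWne hWne
  rw [Set.mem_smul_set] at hx1
  obtain ⟨y, hy, rfl⟩ := hx1
  obtain ⟨w, hw, rfl⟩ := hy
  obtain ⟨n, rfl⟩ : ∃ n, k = n + 1 := ⟨k - 1, by omega⟩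
  refine ⟨g⁻¹, f^[n] w, ?_⟩
  rw [Set.mem_preimage, ← Function.iterate_succ_apply' f n w]
  exact Set.mem_smul_set.2 ⟨g • f^[n + 1] w, hx2, inv_smul_smul g _⟩

/-- Chains of open sets that are pulled into `V` after `i` steps (up to group elements). -/
lemma chainW_aux (f : X → X) (hf : Continuous f) (hpe : Pseudoequivariant (G := G) f)
    (hwm : WeaklyGMixing (G := G) f)
    (V : Set X) (hV : IsOpen V) (hVne : V.Nonempty) :
    ∀ i : ℕ, ∃ W : Set X, IsOpen W ∧ W.Nonempty ∧ ∀ x ∈ W, ∃ τ : G, τ • f^[i] x ∈ V := by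
  intro i
  induction i with
  | zero => exact ⟨V, hV, hVne, fun x hx => ⟨1, by simpa using hx⟩⟩
  | succ n ih =>
    obtain ⟨W, hW, hWne, hWp⟩ := ih
    obtain ⟨g, hg⟩ := preimage_nonempty_aux f hwm W hW hWne
    refine ⟨f ⁻¹' (g • W), (hW.smul g).preimage hf, hg, ?_⟩
    intro x hx
    rw [Set.mem_preimage, Set.mem_smul_set] at hx
    obtain ⟨w, hw, hwx⟩ := hx
    obtain ⟨τ, hτ⟩ := hWp w hw
    obtain ⟨g', hg'⟩ := pe_iter_aux f hpe n g w
    refine ⟨τ * g'⁻¹, ?_⟩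
    rw [Function.iterate_succ_apply, ← hwx, hg', smul_smul, inv_mul_cancel_right]
    exact hτ

/-- Furstenberg-type intersection lemma. -/
lemma furst_aux (f : X → X) (hf : Continuous f) (hpe : Pseudoequivariant (G := G) f)
    (hwm : WeaklyGMixing (G := G) f)
    (A B C D : Set X) (hA : IsOpen A) (hB : IsOpen B) (hC : IsOpen C) (hD : IsOpen D)
    (hAne : A.Nonempty) (hBne : B.Nonempty) (hCne : C.Nonempty) (hDne : D.Nonempty) :
    ∃ U' V' : Set X, IsOpen U' ∧ IsOpen V' ∧ U'.Nonempty ∧ V'.Nonempty ∧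
      ∀ l : ℕ, (∃ σ : G, (σ • (f^[l] '' U') ∩ V').Nonempty) →
        (∃ ρ : G, (ρ • (f^[l] '' A) ∩ B).Nonempty) ∧
        (∃ ρ : G, (ρ • (f^[l] '' C) ∩ D).Nonempty) := by
  obtain ⟨g, h, k, hk, hgk, hhk⟩ := hwm A B C D hA hB hC hD hAne hBne hCne hDne
  obtain ⟨c, hc1, hc2⟩ := hgk
  rw [Set.mem_smul_set] at hc1
  obtain ⟨y, hy, rfl⟩ := hc1
  obtain ⟨a, ha, rfl⟩ := hy
  obtain ⟨d, hd1, hd2⟩ := hhk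
  rw [Set.mem_smul_set] at hd1
  obtain ⟨y, hy, rfl⟩ := hd1
  obtain ⟨b, hb, rfl⟩ := hy
  refine ⟨A ∩ f^[k] ⁻¹' (g⁻¹ • C), B ∩ f^[k] ⁻¹' (h⁻¹ • D),
    hA.inter ((hC.smul g⁻¹).preimage (hf.iterate k)),
    hB.inter ((hD.smul h⁻¹).preimage (hf.iterate k)),
    ⟨a, ha, Set.mem_smul_set.2 ⟨g • f^[k] a, hc2, inv_smul_smul g _⟩⟩,
    ⟨b, hb, Set.mem_smul_set.2 ⟨h • f^[k] b, hd2, inv_smul_smul h _⟩⟩, ?_⟩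
  rintro l ⟨σ, v, hv1, hv2⟩
  rw [Set.mem_smul_set] at hv1
  obtain ⟨y, hy, rfl⟩ := hv1
  obtain ⟨u, hu, rfl⟩ := hy
  obtain ⟨huA, huC⟩ := hu
  obtain ⟨hvB, hvD⟩ := hv2
  constructor
  · exact ⟨σ, σ • f^[l] u, Set.smul_mem_smul_set ⟨u, huA, rfl⟩, hvB⟩
  · have hcC : g • f^[k] u ∈ C := by
      rw [Set.mem_preimage] at huC
      obtain ⟨c', hc', hcc⟩ := Set.mem_smul_set.1 huC
      rw [← hcc, smul_inv_smul]
      exact hc'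
    have hD' : h • f^[k] (σ • f^[l] u) ∈ D := by
      rw [Set.mem_preimage] at hvD
      obtain ⟨d', hd', hdd⟩ := Set.mem_smul_set.1 hvD
      rw [← hdd, smul_inv_smul]
      exact hd'
    obtain ⟨g1, hg1⟩ := pe_iter_aux f hpe l g (f^[k] u)
    obtain ⟨g2, hg2⟩ := pe_iter_aux f hpe k σ⁻¹ (σ • f^[l] u)
    have comm : f^[l] (f^[k] u) = f^[k] (f^[l] u) := by
      rw [← Function.iterate_add_apply, ← Function.iterate_add_apply, Nat.add_comm]
    have key : f^[l] (g • f^[k] u) = (g1 * g2) • f^[k] (σ • f^[l] u) := by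
      have h3 : f^[k] (f^[l] u) = g2 • f^[k] (σ • f^[l] u) := by
        conv_lhs => rw [← inv_smul_smul σ (f^[l] u)]
        exact hg2
      rw [hg1, comm, h3, smul_smul]
    refine ⟨h * g2⁻¹ * g1⁻¹,
      (h * g2⁻¹ * g1⁻¹) • f^[l] (g • f^[k] u),
      Set.smul_mem_smul_set ⟨g • f^[k] u, hcC, rfl⟩, ?_⟩
    rw [key, smul_smul]
    have hgrp : h * g2⁻¹ * g1⁻¹ * (g1 * g2) = h := by group
    rw [hgrp]
    exact hD'

/-- Iterated Furstenberg lemma. -/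
lemma furst_iter_aux (f : X → X) (hf : Continuous f) (hpe : Pseudoequivariant (G := G) f)
    (hwm : WeaklyGMixing (G := G) f)
    (U : Set X) (hU : IsOpen U) (hUne : U.Nonempty)
    (W : ℕ → Set X) (hW : ∀ i, IsOpen (W i)) (hWne : ∀ i, (W i).Nonempty) :
    ∀ n : ℕ, ∃ U' V' : Set X, IsOpen U' ∧ IsOpen V' ∧ U'.Nonempty ∧ V'.Nonempty ∧
      ∀ l : ℕ, (∃ σ : G, (σ • (f^[l] '' U') ∩ V').Nonempty) →
        ∀ i < n, ∃ ρ : G, (ρ • (f^[l] '' U) ∩ W i).Nonempty := by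
  intro n
  induction n with
  | zero => exact ⟨U, U, hU, hU, hUne, hUne, fun l _ i hi => absurd hi (Nat.not_lt_zero i)⟩
  | succ n ih =>
    obtain ⟨U', V', hU', hV', hU'ne, hV'ne, hprop⟩ := ih
    obtain ⟨U'', V'', hU'', hV'', hU''ne, hV''ne, hprop'⟩ :=
      furst_aux f hf hpe hwm U (W n) U' V' hU (hW n) hU' hV' hUne (hWne n) hU'ne hV'ne
    refine ⟨U'', V'', hU'', hV'', hU''ne, hV''ne, fun l hl i hi => ?_⟩
    obtain ⟨h1, h2⟩ := hprop' l hl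
    rcases Nat.lt_succ_iff_lt_or_eq.1 hi with hi | rfl
    · exact hprop l h2 i hi
    · exact h1

/-- Arithmetic: any `l ≥ 1` can be bumped by some `i < m` to a positive multiple of `m`. -/
lemma arith_aux : ∀ l m : ℕ, 1 ≤ m → 1 ≤ l →
    ∃ i j : ℕ, i < m ∧ l + i = m * j ∧ 1 ≤ j := by
  intro l
  induction l using Nat.strong_induction_on with
  | _ l ih =>
    intro m hm hl
    rcases lt_or_ge l m with h | h
    · exact ⟨m - l, 1, by omega, by omega, le_refl 1⟩
    · rcases Nat.eq_or_lt_of_le h with rfl | h'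
      · exact ⟨0, 1, by omega, by omega, le_refl 1⟩
      · obtain ⟨i, j, h1, h2, h3⟩ := ih (l - m) (by omega) m hm (by omega)
        refine ⟨i, j + 1, h1, ?_, by omega⟩
        obtain ⟨a, ha⟩ : ∃ a, m * j = a := ⟨_, rfl⟩
        rw [Nat.mul_add, Nat.mul_one, ha]
        rw [ha] at h2
        omega

end AuxLemmas

/-- Let `X` be a `G`-space and `f : X → X` be pseudoequivariant. If `f` is weakly
`G`-mixing, then `f` is totally `G`-transitive, i.e. `f^[m]` is `G`-transitive for
every `m ≥ 1`. -/
theorem weaklyGMixing_totallyGTransitive {G X : Type*} [Group G] [TopologicalSpace G]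
    [IsTopologicalGroup G] [TopologicalSpace X] [MulAction G X] [ContinuousSMul G X]
    (f : X → X) (hf : Continuous f) (hpe : Pseudoequivariant (G := G) f)
    (hwm : WeaklyGMixing (G := G) f) :
    ∀ m : ℕ, 1 ≤ m → GTransitive (G := G) (f^[m]) := by
  intro m hm U V hU hV hUne hVne
  choose W hWo hWne hWp using chainW_aux f hf hpe hwm V hV hVne
  obtain ⟨U', V', hU', hV', hU'ne, hV'ne, hprop⟩ :=
    furst_iter_aux f hf hpe hwm U hU hUne W hWo hWne m
  obtain ⟨σ, l, hl, hlp⟩ := gtrans_of_wm_aux f hwm U' V' hU' hV' hU'ne hV'ne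
  obtain ⟨i, j, him, hij, hj⟩ := arith_aux l m hm hl
  obtain ⟨ρ, x, hx1, hx2⟩ := hprop l ⟨σ, hlp⟩ i him
  rw [Set.mem_smul_set] at hx1
  obtain ⟨y, hy, rfl⟩ := hx1
  obtain ⟨u, hu, rfl⟩ := hy
  obtain ⟨τ, hτ⟩ := hWp i _ hx2
  obtain ⟨ρ', hρ'⟩ := pe_iter_aux f hpe i ρ (f^[l] u)
  refine ⟨τ * ρ', j, hj, (τ * ρ') • (f^[m])^[j] u,
    Set.smul_mem_smul_set ⟨u, hu, rfl⟩, ?_⟩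
  have hiter : (f^[m])^[j] u = f^[i] (f^[l] u) := by
    rw [← Function.iterate_mul, ← hij, Nat.add_comm l i, Function.iterate_add_apply]
  rw [hiter, mul_smul, ← hρ']
  exact hτ
end

section
/- Let X be a G-space and f : X → X be pseudoequivariant and totally G-transitive such that the set of G_f-periodic points of f is dense in X. Then f is weakly G-mixing. -/
open Pointwise

/-- Let `X` be a `G`-space and `f : X → X` be pseudoequivariant and totally
`G`-transitive with a dense set of `G_f`-periodic points (points `x` with
`g • f^[k] x = x` for some `g ∈ G` and `k ≥ 1`). Then `f` is weakly `G`-mixing. -/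
theorem totallyGTransitive_densePeriodic_weaklyGMixing {G X : Type*} [Group G]
    [TopologicalSpace G] [IsTopologicalGroup G] [TopologicalSpace X] [MulAction G X]
    [ContinuousSMul G X]
    (f : X → X) (hf : Continuous f) (hpe : Pseudoequivariant (G := G) f)
    (htt : ∀ m : ℕ, 1 ≤ m → GTransitive (G := G) (f^[m]))
    (hper : Dense {x : X | ∃ (g : G) (k : ℕ), 1 ≤ k ∧ g • f^[k] x = x}) :
    WeaklyGMixing (G := G) f := by
  intro U V E F hU hV hE hF hUne hVne hEne hFne
  -- iterated pseudoequivariance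
  have hpeI : ∀ m : ℕ, ∀ x : X,
      f^[m] '' (MulAction.orbit G x) = MulAction.orbit G (f^[m] x) := by
    intro m
    induction m with
    | zero => intro x; simp
    | succ m ih =>
      intro x
      have h1 : f^[m+1] '' MulAction.orbit G x = f '' (f^[m] '' MulAction.orbit G x) := by
        rw [← Set.image_comp, ← Function.iterate_succ']
      rw [h1, ih x, hpe, Function.iterate_succ_apply']
  -- group elements move past iterates
  have horb : ∀ (m : ℕ) (g : G) (x : X), ∃ e : G, f^[m] (g • x) = e • f^[m] x := by
    intro m g x
    have h1 : f^[m] (g • x) ∈ MulAction.orbit G (f^[m] x) := by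
      rw [← hpeI m x]
      exact ⟨g • x, MulAction.mem_orbit _ g, rfl⟩
    obtain ⟨e, he⟩ := h1
    exact ⟨e, he.symm⟩
  -- Step 1: transitivity for the pair (V, F)
  obtain ⟨g1, m, hm1, hne1⟩ := htt 1 le_rfl V F hV hF hVne hFne
  obtain ⟨y, hy1, hyF⟩ := hne1
  obtain ⟨z, hz1, hz2⟩ := hy1
  obtain ⟨v, hvV, hvz⟩ := hz1
  have hz2' : g1 • z = y := hz2
  have hvF : g1 • f^[m] v ∈ F := by
    have h1 : (f^[1])^[m] v = f^[m] v := by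
      rw [← Function.iterate_mul, one_mul]
    rw [← h1, hvz, hz2']; exact hyF
  -- the open set W ⊆ V of points sent into F by g1 • f^[m]
  set W : Set X := V ∩ f^[m] ⁻¹' (g1⁻¹ • F) with hW
  have hWopen : IsOpen W := hV.inter ((hF.smul g1⁻¹).preimage (hf.iterate m))
  have hvW : v ∈ W := ⟨hvV, by
    simp only [Set.mem_preimage, Set.mem_inv_smul_set_iff]; exact hvF⟩
  -- pick a periodic point in W
  obtain ⟨p, ⟨g0, n, hn1, hpn⟩, hpW⟩ := hper.exists_mem_open hWopen ⟨v, hvW⟩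
  have hfnp : f^[n] p = g0⁻¹ • p := eq_inv_smul_iff.mpr hpn
  -- powers of periodic point stay in the orbit
  have hpow : ∀ j : ℕ, ∃ c : G, f^[n * j] p = c • p := by
    intro j
    induction j with
    | zero => exact ⟨1, by simp⟩
    | succ j ih =>
      obtain ⟨c, hc⟩ := ih
      have h1 : f^[n * (j + 1)] p = f^[n * j] (f^[n] p) := by
        rw [Nat.mul_succ, Function.iterate_add_apply]
      obtain ⟨e, he⟩ := horb (n * j) g0⁻¹ p
      exact ⟨e * c, by rw [h1, hfnp, he, hc, mul_smul]⟩
  -- f^[m] ⁻¹' E is nonempty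
  have hEpre : (f^[m] ⁻¹' E).Nonempty := by
    obtain ⟨gE, jE, hjE1, hneE⟩ := htt m hm1 E E hE hE hEne hEne
    obtain ⟨y, hy1, hyE⟩ := hneE
    obtain ⟨z, hz1, hz2⟩ := hy1
    obtain ⟨e0, he0E, he0z⟩ := hz1
    obtain ⟨jE', rfl⟩ := Nat.exists_eq_add_of_le hjE1
    have hz2' : gE • z = y := hz2
    have hzeq : z = f^[m] (f^[m * jE'] e0) := by
      rw [← he0z, ← Function.iterate_mul, Nat.mul_add, Nat.mul_one,
        Function.iterate_add_apply]
    have hmem : gE • f^[m] (f^[m * jE'] e0) ∈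
        MulAction.orbit G (f^[m] (f^[m * jE'] e0)) := MulAction.mem_orbit _ gE
    rw [← hpeI m] at hmem
    obtain ⟨w, _, hw2⟩ := hmem
    refine ⟨w, ?_⟩
    show f^[m] w ∈ E
    rw [hw2, ← hzeq, hz2']
    exact hyE
  have hEpreOpen : IsOpen (f^[m] ⁻¹' E) := hE.preimage (hf.iterate m)
  -- Step 2: transitivity of f^[n] for the pair (U, f^[m] ⁻¹' E)
  obtain ⟨g2, j, hj1, hne2⟩ := htt n hn1 U (f^[m] ⁻¹' E) hU hEpreOpen hUne hEpre
  obtain ⟨y, hy1, hyE⟩ := hne2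
  obtain ⟨z, hz1, hz2⟩ := hy1
  obtain ⟨u, huU, huz⟩ := hz1
  have hz2' : g2 • z = y := hz2
  have huE : f^[m] (g2 • f^[n * j] u) ∈ E := by
    have h1 : (f^[n])^[j] u = f^[n * j] u := by rw [← Function.iterate_mul]
    rw [← h1, huz, hz2']
    exact hyE
  -- common exponent
  set k : ℕ := m + n * j with hk
  have hk1 : 1 ≤ k := le_trans hm1 (Nat.le_add_right m (n * j))
  obtain ⟨e, he⟩ := horb m g2 (f^[n * j] u)
  have hgU : e • f^[k] u ∈ E := by
    have : f^[k] u = f^[m] (f^[n * j] u) := Function.iterate_add_apply f m (n * j) u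
    rw [this, ← he]
    exact huE
  obtain ⟨c, hc⟩ := hpow j
  obtain ⟨d, hd⟩ := horb m c p
  have hdk : f^[k] p = d • f^[m] p := by
    rw [hk, Function.iterate_add_apply, hc, hd]
  have hpF : (g1 * d⁻¹) • f^[k] p ∈ F := by
    rw [hdk, mul_smul, inv_smul_smul]
    have := hpW.2
    simpa [Set.mem_inv_smul_set_iff] using this
  refine ⟨e, g1 * d⁻¹, k, hk1, ?_, ?_⟩
  · exact ⟨e • f^[k] u, Set.smul_mem_smul_set (Set.mem_image_of_mem _ huU), hgU⟩
  · exact ⟨(g1 * d⁻¹) • f^[k] p, Set.smul_mem_smul_set (Set.mem_image_of_mem _ hpW.1), hpF⟩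
end

section
/- Let X be a second countable, non-meager G-space and f : X → X be pseudoequivariant and G-transitive such that the G_f-orbit G_f(x) is dense in X for some x ∈ X. If for each neighbourhood W of x there exists N ∈ ℕ such that for all n ≥ N there is g_n ∈ G with g_n • f^n(W) ∩ W ≠ ∅, then f is strongly G-mixing. -/
open Pointwise

/-- The `G_f`-orbit of `x`: the set `{g • f^[k] x : g ∈ G, k ≥ 0}`. -/
def GfOrbit {G X : Type*} [Group G] [MulAction G X] (f : X → X) (x : X) : Set X :=
  {y | ∃ (g : G) (k : ℕ), g • f^[k] x = y}

private lemma pe_iter {G X : Type*} [Group G] [MulAction G X] {f : X → X}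
    (hpe : Pseudoequivariant (G := G) f) (n : ℕ) (g : G) (y : X) :
    ∃ h : G, f^[n] (g • y) = h • f^[n] y := by
  induction n generalizing y g with
  | zero => exact ⟨g, rfl⟩
  | succ n ih =>
    have h1 : f (g • y) ∈ MulAction.orbit G (f y) := by
      rw [← hpe y]
      exact ⟨g • y, MulAction.mem_orbit y g, rfl⟩
    obtain ⟨h₀, hh₀⟩ := MulAction.mem_orbit_iff.mp h1
    obtain ⟨h, hh⟩ := ih h₀ (f y)
    refine ⟨h, ?_⟩
    rw [Function.iterate_succ_apply, Function.iterate_succ_apply, ← hh₀, hh]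

/-- Let `X` be a second countable, non-meager `G`-space and `f : X → X` be
pseudoequivariant and `G`-transitive with `G_f(x)` dense in `X` for some `x ∈ X`.
If for each neighbourhood `W` of `x` there is `N ∈ ℕ` such that for all `n ≥ N` there is
`g_n ∈ G` with `g_n • f^[n] '' W ∩ W ≠ ∅`, then `f` is strongly `G`-mixing. -/
theorem gTransitive_stronglyGMixing {G X : Type*} [Group G] [TopologicalSpace G]
    [IsTopologicalGroup G] [TopologicalSpace X] [MulAction G X] [ContinuousSMul G X]
    [SecondCountableTopology X]
    (hnm : ¬ IsMeagre (Set.univ : Set X))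
    (f : X → X) (hf : Continuous f) (hpe : Pseudoequivariant (G := G) f)
    (htr : GTransitive (G := G) f)
    (x : X) (hdense : Dense (GfOrbit (G := G) f x))
    (hret : ∀ W ∈ nhds x, ∃ N : ℕ, ∀ n ≥ N, ∃ g : G, (g • (f^[n] '' W) ∩ W).Nonempty) :
    StronglyGMixing (G := G) f := by
  intro U V hU hV hUne hVne
  obtain ⟨y₁, ⟨g₁, k₁, hgk₁⟩, hy₁U⟩ := hdense.exists_mem_open hU hUne
  obtain ⟨y₂, ⟨g₂, k₂, hgk₂⟩, hy₂V⟩ := hdense.exists_mem_open hV hVne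
  set W₁ : Set X := (fun y => g₁ • f^[k₁] y) ⁻¹' U with hW₁def
  set W₂ : Set X := (fun y => g₂ • f^[k₂] y) ⁻¹' V with hW₂def
  have hc₁ : Continuous fun y => g₁ • f^[k₁] y :=
    (continuous_const_smul g₁).comp (hf.iterate k₁)
  have hc₂ : Continuous fun y => g₂ • f^[k₂] y :=
    (continuous_const_smul g₂).comp (hf.iterate k₂)
  have hW : W₁ ∩ W₂ ∈ nhds x := by
    refine ((hU.preimage hc₁).inter (hV.preimage hc₂)).mem_nhds ⟨?_, ?_⟩
    · show g₁ • f^[k₁] x ∈ U; rw [hgk₁]; exact hy₁U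
    · show g₂ • f^[k₂] x ∈ V; rw [hgk₂]; exact hy₂V
  obtain ⟨N₀, hN₀⟩ := hret (W₁ ∩ W₂) hW
  refine ⟨N₀ + k₂, fun n hn => ?_⟩
  set m := n + k₁ - k₂ with hm
  have hmN : m ≥ N₀ := by omega
  have hnk : n + k₁ = k₂ + m := by omega
  obtain ⟨gₘ, z, hz1, hz2⟩ := hN₀ m hmN
  obtain ⟨z', ⟨w, hwW, rfl⟩, rfl⟩ := hz1
  have hwW₁ : w ∈ W₁ := hwW.1
  have hzW₂ : gₘ • f^[m] w ∈ W₂ := hz2.2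
  obtain ⟨h, hh⟩ := pe_iter hpe k₂ gₘ (f^[m] w)
  obtain ⟨h', hh'⟩ := pe_iter hpe n g₁ (f^[k₁] w)
  refine ⟨(g₂ * h) * h'⁻¹, ((g₂ * h) * h'⁻¹) • f^[n] (g₁ • f^[k₁] w), ?_, ?_⟩
  · exact Set.smul_mem_smul_set (Set.mem_image_of_mem _ hwW₁)
  · have key : g₂ • f^[k₂] (gₘ • f^[m] w) ∈ V := hzW₂
    have e1 : f^[k₂] (gₘ • f^[m] w) = h • f^[n+k₁] w := by
      rw [hh, ← Function.iterate_add_apply, ← hnk]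
    have e2 : f^[n] (g₁ • f^[k₁] w) = h' • f^[n+k₁] w := by
      rw [hh', ← Function.iterate_add_apply, Nat.add_comm]
    rw [e2, smul_smul, mul_assoc, inv_mul_cancel, mul_one, ← smul_smul, ← e1]
    exact key
end

section
/- Let X and Y be G-spaces and f : X → X, h : Y → Y be pseudoequivariant and G-minimal. Then f × h is (G × G)-minimal if and only if for all g, k ∈ G, x ∈ X, y ∈ Y, both (g • f(x), y) and (x, k • h(y)) belong to the closure of (G × G)_{f × h}(x, y). -/
open Pointwise

/-- `f` is `G`-minimal if every `G_f`-orbit is dense in `X`. -/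
def GMinimal {G X : Type*} [Group G] [MulAction G X] [TopologicalSpace X]
    (f : X → X) : Prop :=
  ∀ x : X, closure (GfOrbit (G := G) f x) = Set.univ

/-- The `(G × G)_{f × h}`-orbit of `(x, y)`:
the set `{(g • f^[k] x, g' • h^[k] y) : g, g' ∈ G, k ≥ 0}`. -/
def ProdGfOrbit {G X Y : Type*} [Group G] [MulAction G X] [MulAction G Y]
    (f : X → X) (h : Y → Y) (p : X × Y) : Set (X × Y) :=
  {q | ∃ (g g' : G) (k : ℕ), q = (g • f^[k] p.1, g' • h^[k] p.2)}

/-- Let `X`, `Y` be `G`-spaces and `f : X → X`, `h : Y → Y` be pseudoequivariant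
`G`-minimal maps. Then `f × h` is `(G × G)`-minimal iff for all `g, k ∈ G`, `x ∈ X`,
`y ∈ Y`, both `(g • f x, y)` and `(x, k • h y)` lie in the closure of the
`(G × G)_{f × h}`-orbit of `(x, y)`. -/
theorem prodGMinimal_iff {G X Y : Type*} [Group G] [TopologicalSpace G]
    [IsTopologicalGroup G] [TopologicalSpace X] [MulAction G X] [ContinuousSMul G X]
    [TopologicalSpace Y] [MulAction G Y] [ContinuousSMul G Y]
    (f : X → X) (h : Y → Y) (hf : Continuous f) (hh : Continuous h)
    (hpef : Pseudoequivariant (G := G) f) (hpeh : Pseudoequivariant (G := G) h)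
    (hminf : GMinimal (G := G) f) (hminh : GMinimal (G := G) h) :
    (∀ p : X × Y, closure (ProdGfOrbit (G := G) f h p) = Set.univ) ↔
      (∀ (g k : G) (x : X) (y : Y),
        (g • f x, y) ∈ closure (ProdGfOrbit (G := G) f h (x, y)) ∧
        (x, k • h y) ∈ closure (ProdGfOrbit (G := G) f h (x, y))) := by
  constructor
  · intro H g k x y
    constructor <;> simp [H (x, y)]
  · intro H p
    obtain ⟨x, y⟩ := p
    set C := closure (ProdGfOrbit (G := G) f h (x, y)) with hCdef
    -- iterated pseudoequivariance
    have pef : ∀ (kk : ℕ) (a : G) (z : X), ∃ b : G, f^[kk] (a • z) = b • f^[kk] z := by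
      intro kk
      induction kk with
      | zero => intro a z; exact ⟨a, rfl⟩
      | succ n ih =>
        intro a z
        have hmem : f (a • z) ∈ MulAction.orbit G (f z) := by
          rw [← hpef z]; exact ⟨a • z, ⟨a, rfl⟩, rfl⟩
        obtain ⟨c, hc⟩ := hmem
        obtain ⟨b, hb⟩ := ih c (f z)
        exact ⟨b, by
          rw [Function.iterate_succ_apply, Function.iterate_succ_apply, ← hc, hb]⟩
    have peh : ∀ (kk : ℕ) (a : G) (z : Y), ∃ b : G, h^[kk] (a • z) = b • h^[kk] z := by
      intro kk
      induction kk with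
      | zero => intro a z; exact ⟨a, rfl⟩
      | succ n ih =>
        intro a z
        have hmem : h (a • z) ∈ MulAction.orbit G (h z) := by
          rw [← hpeh z]; exact ⟨a • z, ⟨a, rfl⟩, rfl⟩
        obtain ⟨c, hc⟩ := hmem
        obtain ⟨b, hb⟩ := ih c (h z)
        exact ⟨b, by
          rw [Function.iterate_succ_apply, Function.iterate_succ_apply, ← hc, hb]⟩
    -- the maps q ↦ (g • f^[k] q.1, g' • h^[k] q.2) preserve C
    have Fmaps : ∀ (g g' : G) (kk : ℕ),
        Set.MapsTo (fun q : X × Y => (g • f^[kk] q.1, g' • h^[kk] q.2)) C C := by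
      intro g g' kk
      apply Set.MapsTo.closure _
        (((hf.iterate kk).comp continuous_fst).const_smul g |>.prodMk
          (((hh.iterate kk).comp continuous_snd).const_smul g'))
      rintro q ⟨a, a', m, rfl⟩
      obtain ⟨b, hb⟩ := pef kk a (f^[m] x)
      obtain ⟨b', hb'⟩ := peh kk a' (h^[m] y)
      exact ⟨g * b, g' * b', kk + m, by
        simp [Function.comp_apply, Function.iterate_add_apply, hb, hb', mul_smul]⟩
    have orbC : ∀ q ∈ C, ProdGfOrbit (G := G) f h q ⊆ C := by
      rintro q hq r ⟨g, g', kk, rfl⟩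
      exact Fmaps g g' kk hq
    have closC : ∀ q ∈ C, closure (ProdGfOrbit (G := G) f h q) ⊆ C := by
      intro q hq
      calc closure (ProdGfOrbit (G := G) f h q) ⊆ closure C := closure_mono (orbC q hq)
        _ = C := closure_closure
    have stepX : ∀ a : X, ∀ b : Y, (a, b) ∈ C → (f a, b) ∈ C := by
      intro a b hab
      have := closC (a, b) hab (H 1 1 a b).1
      simpa using this
    have stepY : ∀ a : X, ∀ b : Y, (a, b) ∈ C → (a, h b) ∈ C := by
      intro a b hab
      have := closC (a, b) hab (H 1 1 a b).2
      simpa using this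
    have act : ∀ (g g' : G), ∀ a : X, ∀ b : Y, (a, b) ∈ C → (g • a, g' • b) ∈ C := by
      intro g g' a b hab
      have := Fmaps g g' 0 hab
      simpa using this
    have base : (x, y) ∈ C := subset_closure ⟨1, 1, 0, by simp⟩
    have iterX : ∀ m : ℕ, (f^[m] x, y) ∈ C := by
      intro m
      induction m with
      | zero => simpa using base
      | succ n ih => simpa [Function.iterate_succ_apply'] using stepX _ _ ih
    have hX : ∀ a : X, (a, y) ∈ C := by
      intro a
      have hsub : GfOrbit (G := G) f x ⊆ {a | (a, y) ∈ C} := by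
        rintro _ ⟨g, m, rfl⟩
        simpa using act g 1 _ _ (iterX m)
      have hclosed : IsClosed {a | (a, y) ∈ C} :=
        IsClosed.preimage (continuous_id.prodMk continuous_const) isClosed_closure
      have : closure (GfOrbit (G := G) f x) ⊆ {a | (a, y) ∈ C} :=
        closure_minimal hsub hclosed
      exact this (by rw [hminf x]; trivial)
    have hXY : ∀ a : X, ∀ b : Y, (a, b) ∈ C := by
      intro a b
      have iterY : ∀ n : ℕ, (a, h^[n] y) ∈ C := by
        intro n
        induction n with
        | zero => simpa using hX a
        | succ m ih => simpa [Function.iterate_succ_apply'] using stepY _ _ ih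
      have hsub : GfOrbit (G := G) h y ⊆ {b | (a, b) ∈ C} := by
        rintro _ ⟨g, n, rfl⟩
        simpa using act 1 g _ _ (iterY n)
      have hclosed : IsClosed {b | (a, b) ∈ C} :=
        IsClosed.preimage (continuous_const.prodMk continuous_id) isClosed_closure
      have : closure (GfOrbit (G := G) h y) ⊆ {b | (a, b) ∈ C} :=
        closure_minimal hsub hclosed
      exact this (by rw [hminh y]; trivial)
    exact Set.eq_univ_of_forall fun q => hXY q.1 q.2
end

section
/- Let X be a Hausdorff G-space, where G is a compact topological group, and let f : X → X be pseudoequivariant and G-minimal. Then either X has no isolated points, or X is a single G_f-orbit, i.e. X = G_f(x) for some x ∈ X. -/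
open Pointwise

/-- Let `X` be a Hausdorff `G`-space, where `G` is a compact topological group, and let
`f : X → X` be pseudoequivariant and `G`-minimal. Then either `X` has no isolated
points, or `X` is a single `G_f`-orbit. -/
theorem gMinimal_no_isolated_or_single_orbit {G X : Type*} [Group G] [TopologicalSpace G]
    [IsTopologicalGroup G] [CompactSpace G] [TopologicalSpace X] [T2Space X]
    [MulAction G X] [ContinuousSMul G X]
    (f : X → X) (hf : Continuous f) (hpe : Pseudoequivariant (G := G) f)
    (hmin : GMinimal (G := G) f) :
    (∀ x : X, ¬ IsOpen ({x} : Set X)) ∨ (∃ x : X, GfOrbit (G := G) f x = Set.univ) := by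
  by_cases h : ∀ x : X, ¬ IsOpen ({x} : Set X)
  · exact Or.inl h
  push_neg at h
  obtain ⟨x₀, hx₀⟩ := h
  right
  refine ⟨x₀, ?_⟩
  -- one-step pseudoequivariance
  have hstep : ∀ (g : G) (y : X), f (g • y) ∈ MulAction.orbit G (f y) := by
    intro g y
    rw [← hpe y]
    exact ⟨g • y, MulAction.mem_orbit y g, rfl⟩
  -- iterated version
  have hiter : ∀ (k : ℕ) (g : G) (y : X), f^[k] (g • y) ∈ MulAction.orbit G (f^[k] y) := by
    intro k
    induction k with
    | zero => intro g y; exact MulAction.mem_orbit y g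
    | succ k ih =>
      intro g y
      obtain ⟨g', hg'⟩ := hstep g y
      rw [Function.iterate_succ_apply, Function.iterate_succ_apply, ← hg']
      exact ih g' (f y)
  -- the orbit of x₀ is open
  have horb_open : IsOpen (MulAction.orbit G x₀) := by
    have heq : MulAction.orbit G x₀ = ⋃ g : G, (fun x : X => g⁻¹ • x) ⁻¹' {x₀} := by
      ext y
      simp only [Set.mem_iUnion, Set.mem_preimage, Set.mem_singleton_iff,
        MulAction.mem_orbit_iff, inv_smul_eq_iff]
      exact ⟨fun ⟨g, hg⟩ => ⟨g, hg.symm⟩, fun ⟨g, hg⟩ => ⟨g, hg.symm⟩⟩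
    rw [heq]
    exact isOpen_iUnion fun g =>
      hx₀.preimage (continuous_const_smul g⁻¹)
  -- x₀ returns to its orbit: ∃ n > 0, f^[n] x₀ ∈ orbit G x₀
  have hret : ∃ n : ℕ, 0 < n ∧ f^[n] x₀ ∈ MulAction.orbit G x₀ := by
    have hx₀mem : x₀ ∈ closure (GfOrbit (G := G) f (f x₀)) := by
      rw [hmin (f x₀)]; trivial
    rw [mem_closure_iff] at hx₀mem
    obtain ⟨y, hy_orb, hy⟩ := hx₀mem (MulAction.orbit G x₀) horb_open
      (MulAction.mem_orbit_self x₀)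
    obtain ⟨g, k, hgk⟩ := hy
    refine ⟨k + 1, Nat.succ_pos k, ?_⟩
    have hmem : g • f^[k + 1] x₀ ∈ MulAction.orbit G x₀ := by
      rw [Function.iterate_succ_apply]
      rwa [hgk]
    obtain ⟨h', hh'⟩ := MulAction.mem_orbit_iff.1 hmem
    exact MulAction.mem_orbit_iff.2 ⟨g⁻¹ * h', by rw [mul_smul, hh', inv_smul_smul]⟩
  obtain ⟨n, hn, hret⟩ := hret
  -- every iterate lands in one of the first n orbits
  have hcycle : ∀ m : ℕ, ∃ j < n, f^[m] x₀ ∈ MulAction.orbit G (f^[j] x₀) := by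
    intro m
    induction m with
    | zero => exact ⟨0, hn, MulAction.mem_orbit_self x₀⟩
    | succ m ih =>
      obtain ⟨j, hj, hmem⟩ := ih
      obtain ⟨g, hg⟩ := MulAction.mem_orbit_iff.1 hmem
      have h1 : f^[m + 1] x₀ ∈ MulAction.orbit G (f^[j + 1] x₀) := by
        have he : f^[m + 1] x₀ = f (g • f^[j] x₀) := by
          rw [Function.iterate_succ_apply']; exact congrArg f hg.symm
        rw [he, Function.iterate_succ_apply']
        exact hstep g (f^[j] x₀)
      by_cases hjn : j + 1 < n
      · exact ⟨j + 1, hjn, h1⟩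
      · have hjeq : j + 1 = n := by omega
        refine ⟨0, hn, ?_⟩
        have : MulAction.orbit G (f^[j + 1] x₀) = MulAction.orbit G x₀ := by
          rw [hjeq]
          exact MulAction.orbit_eq_iff.2 hret
        exact this ▸ h1
  -- the finite union of orbits
  set S : Set X := ⋃ j ∈ Finset.range n, MulAction.orbit G (f^[j] x₀) with hS
  have hS_eq : S = GfOrbit (G := G) f x₀ := by
    apply Set.Subset.antisymm
    · intro y hy
      simp only [hS, Set.mem_iUnion, Finset.mem_range] at hy
      obtain ⟨j, _, g, hg⟩ := hy
      exact ⟨g, j, hg⟩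
    · rintro y ⟨g, k, rfl⟩
      obtain ⟨j, hj, hmem⟩ := hcycle k
      obtain ⟨g', hg'⟩ := MulAction.mem_orbit_iff.1 hmem
      simp only [hS, Set.mem_iUnion, Finset.mem_range]
      exact ⟨j, hj, MulAction.mem_orbit_iff.2 ⟨g * g', by rw [mul_smul, hg']⟩⟩
  have hS_closed : IsClosed S := by
    apply Set.Finite.isClosed_biUnion (Finset.range n).finite_toSet
    intro j _
    have hc : IsCompact (MulAction.orbit G (f^[j] x₀)) := by
      have : MulAction.orbit G (f^[j] x₀) = Set.range (fun g : G => g • f^[j] x₀) := rfl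
      rw [this]
      exact isCompact_range (continuous_id.smul continuous_const)
    exact hc.isClosed
  have : S = Set.univ := by
    have := hmin x₀
    rw [← hS_eq] at this
    rw [← hS_closed.closure_eq, this]
  rw [← hS_eq, this]
end

section
/- Let X be a G-space and f : X → X be pseudoequivariant and G-transitive. If M ⊆ X is a G-minimal set of f, then either M = X or M is nowhere dense in X. -/
open Pointwise

/-- `M` is a `G`-minimal set of `f`: `M` is nonempty, closed, `+f` invariant,
`G`-invariant, and the closure of `G_f(y)` equals `M` for every `y ∈ M`. -/
def IsGMinimalSet {G X : Type*} [Group G] [MulAction G X] [TopologicalSpace X]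
    (f : X → X) (M : Set X) : Prop :=
  M.Nonempty ∧ IsClosed M ∧ f '' M ⊆ M ∧ (∀ g : G, g • M ⊆ M) ∧
    ∀ y ∈ M, closure (GfOrbit (G := G) f y) = M

/-- Let `X` be a `G`-space and `f : X → X` be pseudoequivariant and `G`-transitive.
If `M ⊆ X` is a `G`-minimal set of `f`, then either `M = X` or `M` is nowhere dense
in `X`. -/
theorem gMinimalSet_eq_or_nowhereDense {G X : Type*} [Group G] [TopologicalSpace G]
    [IsTopologicalGroup G] [TopologicalSpace X] [MulAction G X] [ContinuousSMul G X]
    (f : X → X) (hf : Continuous f) (hpe : Pseudoequivariant (G := G) f)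
    (htr : GTransitive (G := G) f)
    (M : Set X) (hM : IsGMinimalSet (G := G) f M) :
    M = Set.univ ∨ IsNowhereDense M := by
  obtain ⟨hMne, hMcl, hfM, hgM, -⟩ := hM
  have hiter : ∀ k : ℕ, f^[k] '' M ⊆ M := by
    intro k
    induction k with
    | zero => simp
    | succ n ih =>
      rw [Function.iterate_succ']
      intro y hy
      obtain ⟨x, hx, rfl⟩ := hy
      exact hfM ⟨f^[n] x, ih ⟨x, hx, rfl⟩, rfl⟩
  by_cases h : (interior M).Nonempty
  · left
    have hdense : Dense M := by
      rw [dense_iff_inter_open]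
      intro V hV hVne
      obtain ⟨g, k, -, y, hy1, hy2⟩ :=
        htr (interior M) V isOpen_interior hV h hVne
      refine ⟨y, hy2, ?_⟩
      obtain ⟨z, ⟨x, hx, rfl⟩, rfl⟩ := hy1
      exact hgM g ⟨f^[k] x, hiter k ⟨x, interior_subset hx, rfl⟩, rfl⟩
    have := hdense.closure_eq
    rwa [hMcl.closure_eq] at this
  · right
    unfold IsNowhereDense
    rw [hMcl.closure_eq]
    exact Set.not_nonempty_iff_eq_empty.mp h
end

section
/- Let X be a G-space and f : X → X be pseudoequivariant. Then f is G-minimal if and only if the induced map f̄ on the orbit space X/G, defined by f̄(G • x) = G • f(x), is minimal, i.e. the f̄-orbit of every point of X/G is dense in X/G. -/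
open Pointwise

/-- Let `X` be a `G`-space and `f : X → X` be pseudoequivariant, and let `fbar` be the
induced map on the orbit space `X/G` (the quotient of `X` by the orbit relation, with
the quotient topology), i.e. `fbar (G • x) = G • f(x)`. Then `f` is `G`-minimal iff
`fbar` is minimal, i.e. every `fbar`-orbit is dense in `X/G`. -/
theorem gMinimal_iff_induced_minimal {G X : Type*} [Group G] [TopologicalSpace G]
    [IsTopologicalGroup G] [TopologicalSpace X] [MulAction G X] [ContinuousSMul G X]
    (f : X → X) (hf : Continuous f) (hpe : Pseudoequivariant (G := G) f)
    (fbar : Quotient (MulAction.orbitRel G X) → Quotient (MulAction.orbitRel G X))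
    (hfbar : ∀ x : X, fbar (Quotient.mk (MulAction.orbitRel G X) x) =
      Quotient.mk (MulAction.orbitRel G X) (f x)) :
    GMinimal (G := G) f ↔
      ∀ ξ : Quotient (MulAction.orbitRel G X),
        Dense {η | ∃ k : ℕ, fbar^[k] ξ = η} := by
  set p : X → Quotient (MulAction.orbitRel G X) := Quotient.mk (MulAction.orbitRel G X)
  have hiter : ∀ (k : ℕ) (x : X), fbar^[k] (p x) = p (f^[k] x) := by
    intro k
    induction k with
    | zero => intro x; rfl
    | succ n ih =>
      intro x
      rw [Function.iterate_succ_apply', Function.iterate_succ_apply', ih, hfbar]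
  have hopen : IsOpenMap p := isOpenMap_quotient_mk'_mul
  constructor
  · intro hmin ξ
    induction ξ using Quotient.inductionOn with
    | h x =>
      rw [dense_iff_inter_open]
      intro U hU hUne
      obtain ⟨η, hη⟩ := hUne
      obtain ⟨z, rfl⟩ := Quotient.exists_rep η
      have hdense : Dense (GfOrbit (G := G) f x) := by
        rw [dense_iff_closure_eq]; exact hmin x
      have hpre : IsOpen (p ⁻¹' U) := hU.preimage continuous_quot_mk
      obtain ⟨y, hyU, g, k, hgk⟩ :=
        dense_iff_inter_open.mp hdense (p ⁻¹' U) hpre ⟨z, hη⟩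
      refine ⟨p y, hyU, k, ?_⟩
      have : (p y : Quotient (MulAction.orbitRel G X)) = p (f^[k] x) :=
        Quotient.sound ⟨g, hgk⟩
      rw [hiter k x, this]
  · intro hmin x
    rw [← dense_iff_closure_eq, dense_iff_inter_open]
    intro U hU hUne
    have hpUopen : IsOpen (p '' U) := hopen U hU
    have hpUne : (p '' U).Nonempty := hUne.image p
    obtain ⟨η, ⟨u, huU, hpu⟩, k, hk⟩ :=
      dense_iff_inter_open.mp (hmin (p x)) (p '' U) hpUopen hpUne
    rw [hiter k x] at hk
    rw [← hpu] at hk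
    obtain ⟨g, hg⟩ := Quotient.exact hk
    exact ⟨u, huU, g⁻¹, k, by rw [← hg, inv_smul_smul]⟩
end

section
/- Let X be a sequentially compact G-space and f : X → X be pseudoequivariant. Then f is G-minimal if and only if for every nonempty open set U ⊆ X there exists n ∈ ℕ such that ⋃_{g ∈ G} ⋃_{k=0}^{n} g • f^{-k}(U) = X. -/
open Pointwise

/-- Let `X` be a sequentially compact `G`-space and `f : X → X` be pseudoequivariant.
Then `f` is `G`-minimal iff for every nonempty open set `U ⊆ X` there is `n ∈ ℕ` with
`⋃_{g ∈ G} ⋃_{k = 0}^{n} g • f^{-k}(U) = X`. -/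
theorem gMinimal_iff_finite_cover {G X : Type*} [Group G] [TopologicalSpace G]
    [IsTopologicalGroup G] [TopologicalSpace X] [SeqCompactSpace X]
    [MulAction G X] [ContinuousSMul G X]
    (f : X → X) (hf : Continuous f) (hpe : Pseudoequivariant (G := G) f) :
    GMinimal (G := G) f ↔
      ∀ U : Set X, IsOpen U → U.Nonempty →
        ∃ n : ℕ, (⋃ g : G, ⋃ k ≤ n, g • (f^[k] ⁻¹' U)) = Set.univ := by
  classical
  have pei : ∀ (k : ℕ) (x : X),
      f^[k] '' (MulAction.orbit G x) = MulAction.orbit G (f^[k] x) := by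
    intro k
    induction k with
    | zero => intro x; simp
    | succ k ih =>
      intro x
      rw [Function.iterate_succ']
      calc (f ∘ f^[k]) '' MulAction.orbit G x
          = f '' (f^[k] '' MulAction.orbit G x) := Set.image_comp _ _ _
        _ = f '' MulAction.orbit G (f^[k] x) := by rw [ih]
        _ = MulAction.orbit G (f (f^[k] x)) := hpe _
        _ = MulAction.orbit G ((f ∘ f^[k]) x) := rfl
  constructor
  · intro hmin U hU hUne
    set V : ℕ → Set X := fun n => ⋃ g : G, ⋃ k ≤ n, g • (f^[k] ⁻¹' U) with hV
    have hVopen : ∀ n, IsOpen (V n) := by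
      intro n
      refine isOpen_iUnion fun g => isOpen_iUnion fun k => isOpen_iUnion fun _ => ?_
      exact (hU.preimage (hf.iterate k)).smul g
    have hVmono : Monotone V := by
      intro m n hmn
      exact Set.iUnion_mono fun g => Set.iUnion₂_mono' fun k hk => ⟨k, hk.trans hmn, subset_rfl⟩
    have hcover : ∀ x : X, ∃ n, x ∈ V n := by
      intro x
      have hd : Dense (GfOrbit (G := G) f x) := dense_iff_closure_eq.mpr (hmin x)
      obtain ⟨y, hyU, g, k, hgk⟩ := dense_iff_inter_open.mp hd U hU hUne
      have hmem : g • f^[k] x ∈ f^[k] '' MulAction.orbit G x := by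
        rw [pei k x]; exact MulAction.mem_orbit _ g
      obtain ⟨z, hz, hzx⟩ := hmem
      obtain ⟨h, rfl⟩ := MulAction.mem_orbit_iff.mp hz
      refine ⟨k, Set.mem_iUnion.mpr ⟨h⁻¹, Set.mem_iUnion.mpr ⟨k,
        Set.mem_iUnion.mpr ⟨le_rfl, ?_⟩⟩⟩⟩
      rw [Set.mem_smul_set_iff_inv_smul_mem, inv_inv]
      show f^[k] (h • x) ∈ U
      rw [hzx, hgk]; exact hyU
    by_contra hcon
    push_neg at hcon
    have hx : ∀ n, ∃ x : X, x ∉ V n := fun n =>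
      (Set.ne_univ_iff_exists_notMem _).mp (hcon n)
    choose x hxn using hx
    obtain ⟨a, -, φ, hφ, hta⟩ := isSeqCompact_univ (fun n => Set.mem_univ (x n))
    obtain ⟨m, ham⟩ := hcover a
    have hev : ∀ᶠ n in Filter.atTop, x (φ n) ∈ V m :=
      hta.eventually ((hVopen m).mem_nhds ham)
    obtain ⟨n, hn1, hn2⟩ := (hev.and (Filter.eventually_ge_atTop m)).exists
    exact hxn (φ n) (hVmono (hn2.trans hφ.le_apply) hn1)
  · intro hc x
    refine Dense.closure_eq ?_
    rw [dense_iff_inter_open]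
    intro U hU hUne
    obtain ⟨n, hn⟩ := hc U hU hUne
    have hx : x ∈ ⋃ g : G, ⋃ k ≤ n, g • (f^[k] ⁻¹' U) := hn ▸ Set.mem_univ x
    simp only [Set.mem_iUnion] at hx
    obtain ⟨g, k, -, hmem⟩ := hx
    rw [Set.mem_smul_set_iff_inv_smul_mem] at hmem
    have h2 : f^[k] (g⁻¹ • x) ∈ MulAction.orbit G (f^[k] x) := by
      rw [← pei k x]; exact ⟨g⁻¹ • x, MulAction.mem_orbit _ _, rfl⟩
    obtain ⟨g', hg'⟩ := MulAction.mem_orbit_iff.mp h2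
    exact ⟨f^[k] (g⁻¹ • x), hmem, g', k, hg'⟩
end

section
/- Let X be a nonempty compact Hausdorff G-space and f : X → X be pseudoequivariant. Then X contains a nonempty subset A that is closed, G-invariant (g • A ⊆ A for all g ∈ G), f-invariant (f(A) = A), and G-minimal, i.e. for every y ∈ A the closure of G_f(y) equals A. -/
open Pointwise

/-- Let `X` be a nonempty compact Hausdorff `G`-space and `f : X → X` be
pseudoequivariant. Then `X` contains a nonempty subset `A` that is closed,
`G`-invariant, `f`-invariant (`f(A) = A`), and `G`-minimal (the closure of `G_f(y)`
equals `A` for every `y ∈ A`). -/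
theorem exists_gMinimal_set {G X : Type*} [Group G] [TopologicalSpace G]
    [IsTopologicalGroup G] [TopologicalSpace X] [CompactSpace X] [T2Space X] [Nonempty X]
    [MulAction G X] [ContinuousSMul G X]
    (f : X → X) (hf : Continuous f) (hpe : Pseudoequivariant (G := G) f) :
    ∃ A : Set X, A.Nonempty ∧ IsClosed A ∧ (∀ g : G, g • A ⊆ A) ∧ f '' A = A ∧
      ∀ y ∈ A, closure (GfOrbit (G := G) f y) = A := by
  classical
  set S : Set (Set X) :=
    {A | A.Nonempty ∧ IsClosed A ∧ f '' A ⊆ A ∧ ∀ g : G, g • A ⊆ A} with hS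
  -- the key pointwise consequence of pseudoequivariance
  have hkey : ∀ (g : G) (x : X), ∃ h : G, f (g • x) = h • f x := by
    intro g x
    have : f (g • x) ∈ MulAction.orbit G (f x) := by
      rw [← hpe x]
      exact ⟨g • x, MulAction.mem_orbit x g, rfl⟩
    obtain ⟨h, hh⟩ := this
    exact ⟨h, hh.symm⟩
  -- Zorn's lemma
  have hchain : ∀ c ⊆ S, IsChain (· ⊆ ·) c → c.Nonempty → ∃ lb ∈ S, ∀ s ∈ c, lb ⊆ s := by
    intro c hcS hchain hcne
    refine ⟨⋂₀ c, ⟨?_, ?_, ?_, ?_⟩, fun s hs => Set.sInter_subset_of_mem hs⟩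
    · have : Nonempty c := hcne.to_subtype
      refine IsCompact.nonempty_sInter_of_directed_nonempty_isCompact_isClosed
        ?_ (fun U hU => (hcS hU).1) (fun U hU => (hcS hU).2.1.isCompact)
        (fun U hU => (hcS hU).2.1)
      exact fun a ha b hb => (hchain.total ha hb).elim
        (fun h => ⟨a, ha, subset_rfl, h⟩) (fun h => ⟨b, hb, h, subset_rfl⟩)
    · exact isClosed_sInter fun U hU => (hcS hU).2.1
    · rintro _ ⟨x, hx, rfl⟩
      exact fun U hU => (hcS hU).2.2.1 ⟨x, hx U hU, rfl⟩
    · intro g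
      rintro _ ⟨x, hx, rfl⟩
      exact fun U hU => (hcS hU).2.2.2 g ⟨x, hx U hU, rfl⟩
  have hXS : (Set.univ : Set X) ∈ S :=
    ⟨Set.univ_nonempty, isClosed_univ, fun _ _ => trivial, fun _ _ _ => trivial⟩
  obtain ⟨M, -, hMS, hMmin⟩ := zorn_superset_nonempty S hchain _ hXS
  obtain ⟨hMne, hMcl, hMf, hMg⟩ := hMS
  -- minimal elements of S: any member of S contained in M equals M
  have hmin : ∀ A ∈ S, A ⊆ M → A = M := fun A hA hAM => subset_antisymm hAM (hMmin hA hAM)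
  -- f '' M = M
  have hfM : f '' M = M := by
    apply hmin
    · refine ⟨hMne.image f, (hMcl.isCompact.image hf).isClosed, ?_, ?_⟩
      · rintro _ ⟨_, ⟨x, hx, rfl⟩, rfl⟩
        exact ⟨f x, hMf ⟨x, hx, rfl⟩, rfl⟩
      · intro g
        rintro _ ⟨_, ⟨x, hx, rfl⟩, rfl⟩
        have : g • f x ∈ f '' MulAction.orbit G x := by
          rw [hpe x]; exact MulAction.mem_orbit _ g
        obtain ⟨z, hz, hz2⟩ := this
        obtain ⟨h, rfl⟩ := hz
        exact ⟨h • x, hMg h ⟨x, hx, rfl⟩, hz2⟩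
    · exact fun y ⟨x, hx, hxy⟩ => hxy ▸ hMf ⟨x, hx, rfl⟩
  -- G_f orbits
  refine ⟨M, hMne, hMcl, hMg, hfM, fun y hy => ?_⟩
  have hyGf : y ∈ GfOrbit (G := G) f y := ⟨1, 0, by simp⟩
  have horb_sub : GfOrbit (G := G) f y ⊆ M := by
    rintro _ ⟨g, k, rfl⟩
    apply hMg g
    refine ⟨f^[k] y, ?_, rfl⟩
    induction k with
    | zero => exact hy
    | succ n ih => rw [Function.iterate_succ_apply']; exact hMf ⟨_, ih, rfl⟩
  apply hmin
  · refine ⟨⟨y, subset_closure hyGf⟩, isClosed_closure, ?_, ?_⟩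
    · have hsub : f '' GfOrbit (G := G) f y ⊆ GfOrbit (G := G) f y := by
        rintro _ ⟨_, ⟨g, k, rfl⟩, rfl⟩
        obtain ⟨h, hh⟩ := hkey g (f^[k] y)
        exact ⟨h, k + 1, by rw [Function.iterate_succ_apply', ← hh]⟩
      calc f '' closure (GfOrbit (G := G) f y)
          ⊆ closure (f '' GfOrbit (G := G) f y) := image_closure_subset_closure_image hf
        _ ⊆ closure (GfOrbit (G := G) f y) := closure_mono hsub
    · intro g
      have hsub : g • GfOrbit (G := G) f y ⊆ GfOrbit (G := G) f y := by
        rintro _ ⟨_, ⟨h, k, rfl⟩, rfl⟩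
        exact ⟨g * h, k, by rw [mul_smul]⟩
      calc g • closure (GfOrbit (G := G) f y)
          = closure (g • GfOrbit (G := G) f y) := (closure_smul g _).symm
        _ ⊆ closure (GfOrbit (G := G) f y) := closure_mono hsub
  · exact closure_minimal horb_sub hMcl
end

section
/- Let X be a G-space and f : X → X be pseudoequivariant. If x ∈ X is a G_f-periodic point of f with G_f-prime period k (i.e. k ≥ 1 is the smallest positive integer such that g • f^k(x) = x for some g ∈ G), then G_f(x) = ⋃_{m=0}^{k-1} G • f^m(x). -/
open Pointwise

/-- Let `X` be a `G`-space and `f : X → X` be pseudoequivariant. If `x ∈ X` is a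
`G_f`-periodic point of `f` with `G_f`-prime period `k` (that is, `k ≥ 1` is the
smallest positive integer such that `g • f^[k] x = x` for some `g ∈ G`), then
`G_f(x) = ⋃_{m = 0}^{k - 1} G • f^[m] x`. -/
theorem gfOrbit_of_periodic {G X : Type*} [Group G] [TopologicalSpace G]
    [IsTopologicalGroup G] [TopologicalSpace X] [MulAction G X] [ContinuousSMul G X]
    (f : X → X) (hf : Continuous f) (hpe : Pseudoequivariant (G := G) f)
    (x : X) (k : ℕ) (hk : 1 ≤ k) (hper : ∃ g : G, g • f^[k] x = x)
    (hmin : ∀ j : ℕ, 1 ≤ j → j < k → ¬ ∃ g : G, g • f^[j] x = x) :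
    GfOrbit (G := G) f x = ⋃ m < k, MulAction.orbit G (f^[m] x) := by
  -- pseudoequivariance pushes orbit membership through `f`
  have hstep : ∀ z y : X, y ∈ MulAction.orbit G z → f y ∈ MulAction.orbit G (f z) := by
    intro z y hy
    rw [← hpe z]
    exact Set.mem_image_of_mem f hy
  have hiter : ∀ (m : ℕ) (z y : X), y ∈ MulAction.orbit G z →
      f^[m] y ∈ MulAction.orbit G (f^[m] z) := by
    intro m
    induction m with
    | zero => intro z y hy; simpa using hy
    | succ n ih =>
      intro z y hy
      rw [Function.iterate_succ_apply', Function.iterate_succ_apply']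
      exact hstep _ _ (ih z y hy)
  obtain ⟨g0, hg0⟩ := hper
  have hkx : f^[k] x ∈ MulAction.orbit G x := ⟨g0⁻¹, by show g0⁻¹ • x = f^[k] x; rw [inv_smul_eq_iff, hg0]⟩
  -- every iterate lands in an orbit of an iterate of index < k
  have hmain : ∀ n : ℕ, ∃ m : ℕ, m < k ∧ f^[n] x ∈ MulAction.orbit G (f^[m] x) := by
    intro n
    induction n using Nat.strong_induction_on with
    | _ n ih =>
      by_cases hn : n < k
      · exact ⟨n, hn, MulAction.mem_orbit_self _⟩
      · push_neg at hn
        have hlt : n - k < n := Nat.sub_lt (lt_of_lt_of_le (by omega) hn) (by omega)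
        obtain ⟨m, hm, hmem⟩ := ih (n - k) hlt
        refine ⟨m, hm, ?_⟩
        have h1 : f^[n] x = f^[n - k] (f^[k] x) := by
          rw [← Function.iterate_add_apply]
          congr 1
          omega
        have h2 : f^[n] x ∈ MulAction.orbit G (f^[n - k] x) := by
          rw [h1]
          exact hiter _ _ _ hkx
        obtain ⟨g1, hg1⟩ := h2
        obtain ⟨g2, hg2⟩ := hmem
        exact ⟨g1 * g2, by show (g1 * g2) • _ = _; simp only [] at hg1 hg2; rw [mul_smul, hg2, hg1]⟩
  ext y
  constructor
  · rintro ⟨g, n, rfl⟩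
    obtain ⟨m, hm, g', hg'⟩ := hmain n
    refine Set.mem_iUnion₂.mpr ⟨m, hm, g * g', ?_⟩
    show (g * g') • _ = _
    simp only [] at hg'
    rw [mul_smul, hg']
  · intro hy
    obtain ⟨m, _, g, hg⟩ := Set.mem_iUnion₂.mp hy
    exact ⟨g, m, hg⟩
end
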